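/- Let a, b ∈ ℂ be nonzero with 2 ≤ |a|, |b| ≥ (3/2)|a|, and |b| ≥ 22, and let c ∈ ℂ with |c| > |b|¹⁶. Then 27·(|ac| - 1)² > 16·|a|²·|b - a|², i.e., the quantity L = 27(|ac|-1)²/(16|a|²|b-a|²) satisfies L > 1. -/

import Mathlib

/-- If a, b, c ∈ ℂ are nonzero with 2 ≤ |a|, |b| ≥ (3/2)|a|, |b| ≥ 22 and |c| > |b|¹⁶,
then 27(|ac| - 1)² > 16|a|²|b-a|², i.e. L > 1. -/
theorem stmt_8 (a b c : ℂ) (ha0 : a ≠ 0) (hb0 : b ≠ 0) (hc0 : c ≠ 0)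
    (ha : 2 ≤ ‖a‖) (hba : ‖b‖ ≥ (3 / 2) * ‖a‖)
    (hb : ‖b‖ ≥ 22) (hc : ‖c‖ > ‖b‖ ^ (16 : ℕ)) :
    27 * (‖a * c‖ - 1) ^ 2 > 16 * ‖a‖ ^ 2 * ‖b - a‖ ^ 2 := by
  set A := ‖a‖ with hA
  set B := ‖b‖ with hB
  have hac : ‖a * c‖ = A * ‖c‖ := norm_mul _ _
  have hsub : ‖b - a‖ ≤ B + A := by
    calc ‖b - a‖ ≤ ‖b‖ + ‖a‖ := by
          simpa using norm_sub_le b a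
    _ = B + A := rfl
  have hAB : A ≤ (2 / 3) * B := by linarith
  have hsub2 : ‖b - a‖ ≤ (5 / 3) * B := by linarith
  have hsub0 : 0 ≤ ‖b - a‖ := norm_nonneg _
  have hA0 : 0 ≤ A := norm_nonneg _
  have hB0 : (0:ℝ) < B := by linarith
  -- RHS ≤ 1600/81 B^4 < 20 B^4
  have hRHS : 16 * A ^ 2 * ‖b - a‖ ^ 2 ≤ 1600 / 81 * B ^ 4 := by
    have h1 : A ^ 2 ≤ ((2/3)*B) ^ 2 := by nlinarith
    have h2 : ‖b - a‖ ^ 2 ≤ ((5/3)*B) ^ 2 := by nlinarith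
    nlinarith
  -- LHS: |ac| - 1 ≥ B^2
  have hB16 : B ^ 2 * B ^ 2 ≤ B ^ (16:ℕ) := by
    have : B ^ 4 ≤ B ^ 16 := pow_le_pow_right₀ (by linarith) (by norm_num)
    calc B ^ 2 * B ^ 2 = B ^ 4 := by ring
    _ ≤ B ^ 16 := this
  have hkey : B ^ 2 + 1 ≤ A * ‖c‖ := by
    have hc' : B ^ (16:ℕ) ≤ ‖c‖ := le_of_lt hc
    have : 2 * B ^ (16:ℕ) ≤ A * ‖c‖ := by
      have hcpos : (0:ℝ) ≤ ‖c‖ := norm_nonneg _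
      nlinarith
    nlinarith [hB16, sq_nonneg B, sq_nonneg (B-1)]
  have hL : B ^ 2 ≤ ‖a * c‖ - 1 := by rw [hac]; linarith
  have : 27 * (B ^ 2) ^ 2 ≤ 27 * (‖a * c‖ - 1) ^ 2 := by
    have h0 : (0:ℝ) ≤ B ^ 2 := sq_nonneg B
    nlinarith
  calc 16 * A ^ 2 * ‖b - a‖ ^ 2 ≤ 1600 / 81 * B ^ 4 := hRHS
  _ < 27 * (B ^ 2) ^ 2 := by nlinarith [pow_pos hB0 4]
  _ ≤ 27 * (‖a * c‖ - 1) ^ 2 := this
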